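/- checkAS correctness: Let P be a ground propositional normal program and M an interpretation over its head atoms. The stratified program checkAS(P, M) — which encodes M as facts over a fresh negative signature, encodes the Gelfond–Lifschitz reduct of P with respect to M over a fresh positive signature, derives fail_M whenever the positive and negative signatures disagree on some head atom, and derives as_M :- not fail_M — derives the atom as_M in its unique answer set extended with any fixed interpretation of the non-head atoms X if and only if M ∪ X restricted appropriately is an answer set of P ∪ fix(X), i.e., as_M holds iff M is (the head-atom part of) an answer set of P under input X. -/

import Mathlib

open Classical

/-- A propositional normal rule: optional head (none = constraint),
positive body atoms and (default-)negated body atoms. -/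
structure ARule (α : Type) where
  head : Option α
  pos : Set α
  neg : Set α

/-- A propositional normal logic program. -/
abbrev AProgram (α : Type) := Set (ARule α)

namespace ASP

variable {α : Type}

def ARule.headSet (r : ARule α) : Set α := {a | r.head = some a}

def ARule.atoms (r : ARule α) : Set α := ARule.headSet r ∪ r.pos ∪ r.neg

def progAtoms (P : AProgram α) : Set α := ⋃ r ∈ P, ARule.atoms r

def heads (P : AProgram α) : Set α := {a | ∃ r ∈ P, r.head = some a}

/-- The body of a rule is true in interpretation `I`. -/
def bodyTrue (I : Set α) (r : ARule α) : Prop :=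
  r.pos ⊆ I ∧ ∀ a ∈ r.neg, a ∉ I

/-- `I` satisfies rule `r`. -/
def satRule (I : Set α) (r : ARule α) : Prop :=
  bodyTrue I r → ∃ h, r.head = some h ∧ h ∈ I

def isModel (I : Set α) (P : AProgram α) : Prop := ∀ r ∈ P, satRule I r

/-- Gelfond–Lifschitz reduct of `P` with respect to `I`. -/
def reduct (P : AProgram α) (I : Set α) : AProgram α :=
  {r' | ∃ r ∈ P, (∀ a ∈ r.neg, a ∉ I) ∧ r' = ⟨r.head, r.pos, ∅⟩}

/-- `I` is an answer set of `P`: a minimal model of the reduct `P^I`. -/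
def isAnswerSet (P : AProgram α) (I : Set α) : Prop :=
  isModel I (reduct P I) ∧ ∀ J, J ⊂ I → ¬ isModel J (reduct P I)

/-- A program is coherent if it has an answer set. -/
def coherent (P : AProgram α) : Prop := ∃ I, isAnswerSet P I

/-- `fix B M`: facts for atoms of `M` and constraints for atoms of `B \ M`. -/
def fixProg (B M : Set α) : AProgram α :=
  {r | (∃ a ∈ M, r = ⟨some a, ∅, ∅⟩) ∨ (∃ a ∈ B \ M, r = ⟨none, {a}, ∅⟩)}

/-- A ground weak constraint `:~ pos, not neg [weight@level]`. -/
structure WeakC (α : Type) where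
  pos : Set α
  neg : Set α
  weight : ℤ
  level : ℤ

def WeakC.atoms (w : WeakC α) : Set α := w.pos ∪ w.neg

/-- The body of a weak constraint is true in `I` (the weak constraint is violated). -/
def WeakC.violated (w : WeakC α) (I : Set α) : Prop :=
  w.pos ⊆ I ∧ ∀ a ∈ w.neg, a ∉ I

/-- Cost of interpretation `I` at level `l` for weak constraints `W`. -/
noncomputable def cost (W : Finset (WeakC α)) (I : Set α) (l : ℤ) : ℤ :=
  ∑ w ∈ W.filter (fun w => w.level = l ∧ WeakC.violated w I), w.weight

/-- `I` is dominated by `J` with respect to the weak constraints `W`. -/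
def dominated (W : Finset (WeakC α)) (I J : Set α) : Prop :=
  ∃ l, cost W I l > cost W J l ∧ ∀ l' > l, cost W I l' = cost W J l'

/-- `M` is an optimal answer set of program `P` with weak constraints `W`. -/
def optAS (P : AProgram α) (W : Finset (WeakC α)) (M : Set α) : Prop :=
  isAnswerSet P M ∧ ∀ M', isAnswerSet P M' → ¬ dominated W M M'

/-- `sat(P)`: add `not s` to each rule body, plus a choice on the fresh atom `s`
 (rules `s :- not n` and `n :- not s`). -/
def satProg (s n : α) (P : AProgram α) : AProgram α :=
  ((fun r : ARule α => ARule.mk r.head r.pos (insert s r.neg)) '' P) ∪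
    {⟨some s, ∅, {n}⟩, ⟨some n, ∅, {s}⟩}

/-- Complement `¬P` of a program with constraints: each constraint `:- B` becomes
 `v :- B`, and the constraint `:- not v` is added. -/
def complProg (v : α) (P : AProgram α) : AProgram α :=
  {r | r ∈ P ∧ r.head ≠ none} ∪
    {r' | ∃ r ∈ P, r.head = none ∧ r' = ⟨some v, r.pos, r.neg⟩} ∪
    {⟨none, ∅, {v}⟩}

/-- Rules of `relaxed(P,l)`: keep rules with heads, turn each constraint `:- B`
into `unsat :- B`. -/
def relaxedRules (u : α) (P : AProgram α) : AProgram α :=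
  {r | r ∈ P ∧ r.head ≠ none} ∪
    {r' | ∃ r ∈ P, r.head = none ∧ r' = ⟨some u, r.pos, r.neg⟩}

/-- The weak constraint `:~ unsat [1@l]` of `relaxed(P,l)`. -/
def relaxWeak (u : α) (l : ℤ) : WeakC α := ⟨{u}, ∅, 1, l⟩

/-- A stratification: positive dependencies do not increase the level,
negative dependencies strictly decrease it. -/
def IsStratification (P : AProgram α) (lv : α → ℕ) : Prop :=
  ∀ r ∈ P, ∀ h, r.head = some h →
    (∀ a ∈ r.pos, lv a ≤ lv h) ∧ (∀ a ∈ r.neg, lv a < lv h)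

def Stratified (P : AProgram α) : Prop := ∃ lv, IsStratification P lv

/-- `M` (an answer set of a program with atom base `B`) satisfies the constraint
program `C` iff `C ∪ fix_B(M)` is coherent. -/
def satisfiesC (C : AProgram α) (B M : Set α) : Prop := coherent (C ∪ fixProg B M)

end ASP

open ASP


namespace ASPX
open ASP
variable {α : Type}

lemma mem_reduct_of {P : AProgram α} {I : Set α} {r : ARule α} (hr : r ∈ P)
    (hneg : ∀ a ∈ r.neg, a ∉ I) : (⟨r.head, r.pos, ∅⟩ : ARule α) ∈ reduct P I :=
  ⟨r, hr, hneg, rfl⟩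

lemma as_min {P : AProgram α} {N N' : Set α} (h : isAnswerSet P N) (hsub : N' ⊆ N)
    (hmod : isModel N' (reduct P N)) : N ⊆ N' := by
  by_contra hc
  exact h.2 N' ⟨hsub, fun h2 => hc h2⟩ hmod

lemma as_derive {P : AProgram α} {N : Set α} (h : isAnswerSet P N) {r : ARule α} {a : α}
    (hr : r ∈ P) (hh : r.head = some a) (hpos : r.pos ⊆ N) (hneg : ∀ b ∈ r.neg, b ∉ N) :
    a ∈ N := by
  have := h.1 _ (mem_reduct_of hr hneg) ⟨hpos, by simp⟩
  obtain ⟨b, hb, hbn⟩ := this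
  simp only [hh, Option.some.injEq] at hb
  exact hb ▸ hbn

lemma as_sub_reduct {P : AProgram α} {N : Set α} (h : isAnswerSet P N) :
    N ⊆ heads (reduct P N) := by
  have hmod : isModel (N ∩ heads (reduct P N)) (reduct P N) := by
    rintro r ⟨s, hs, hneg, rfl⟩ hbt
    have hbtN : bodyTrue N (⟨s.head, s.pos, ∅⟩ : ARule α) :=
      ⟨hbt.1.trans Set.inter_subset_left, by simp [ARule.neg]⟩
    obtain ⟨b, hb, hbn⟩ := h.1 _ ⟨s, hs, hneg, rfl⟩ hbtN
    exact ⟨b, hb, hbn, _, ⟨s, hs, hneg, rfl⟩, hb⟩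
  have := as_min h Set.inter_subset_left hmod
  exact fun a ha => (this ha).2

end ASPX

open ASPX

/-- Map head atoms of `P` to a fresh signature via `f`, leaving other atoms
unchanged. -/
noncomputable def sigMap {α : Type} (P : AProgram α) (f : α → α) : α → α :=
  fun a => if a ∈ heads P then f a else a

/-- The `checkAS(P, M)` program: `M` is encoded as facts over the negative
signature `ns`, the GL-reduct of `P` w.r.t. `M` is simulated over the positive
signature `ps` (constraints derive `failA`), `failA` is derived when the two
signatures disagree on a head atom, and `asA :- not failA`. -/
noncomputable def checkAS {α : Type} (P : AProgram α) (ps ns : α → α)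
    (failA asA : α) (M : Set α) : AProgram α :=
  {r | ∃ p ∈ M, r = ⟨some (ns p), ∅, ∅⟩} ∪
  {r' | ∃ r ∈ P, r.head ≠ none ∧
    r' = ⟨r.head.map (sigMap P ps), sigMap P ps '' r.pos, sigMap P ns '' r.neg⟩} ∪
  {r' | ∃ r ∈ P, r.head = none ∧
    r' = ⟨some failA, sigMap P ps '' r.pos, sigMap P ns '' r.neg⟩} ∪
  {r' | ∃ p ∈ heads P,
    r' = ⟨some failA, {ps p}, {ns p}⟩ ∨ r' = ⟨some failA, {ns p}, {ps p}⟩} ∪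
  {⟨some asA, ∅, {failA}⟩}

/-- checkAS correctness: for every interpretation `X` of the
non-head atoms and every answer set `N` of `checkAS(P,M)` together with the
input `X` fixed, `as_M ∈ N` iff `M ∪ X` is an answer set of `P ∪ fix(X)`. -/
theorem checkAS_correct {α : Type} (P : AProgram α) (hfin : P.Finite)
    (ps ns : α → α) (failA asA : α) (M : Set α)
    (hpsInj : Set.InjOn ps (heads P)) (hnsInj : Set.InjOn ns (heads P))
    (hfresh : ∀ p ∈ heads P,
      ps p ∉ progAtoms P ∧ ns p ∉ progAtoms P ∧
      ps p ≠ failA ∧ ps p ≠ asA ∧ ns p ≠ failA ∧ ns p ≠ asA)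
    (hdisj : ∀ p ∈ heads P, ∀ q ∈ heads P, ps p ≠ ns q)
    (hfail : failA ∉ progAtoms P) (has : asA ∉ progAtoms P) (hfa : failA ≠ asA)
    (hM : M ⊆ heads P) :
    ∀ X ⊆ progAtoms P \ heads P, ∀ N,
      isAnswerSet (checkAS P ps ns failA asA M ∪ fixProg (progAtoms P \ heads P) X) N →
        (asA ∈ N ↔ isAnswerSet (P ∪ fixProg (progAtoms P \ heads P) X) (M ∪ X)) := by
  classical
  intro X hX N hN
  set Q : AProgram α := checkAS P ps ns failA asA M ∪ fixProg (progAtoms P \ heads P) X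
    with hQdef
  have hQelim : ∀ {r : ARule α}, r ∈ Q →
      (∃ p ∈ M, r = ⟨some (ns p), ∅, ∅⟩) ∨
      (∃ s ∈ P, s.head ≠ none ∧
        r = ⟨s.head.map (sigMap P ps), sigMap P ps '' s.pos, sigMap P ns '' s.neg⟩) ∨
      (∃ s ∈ P, s.head = none ∧ r = ⟨some failA, sigMap P ps '' s.pos, sigMap P ns '' s.neg⟩) ∨
      (∃ p ∈ heads P, r = ⟨some failA, {ps p}, {ns p}⟩ ∨ r = ⟨some failA, {ns p}, {ps p}⟩) ∨
      r = ⟨some asA, ∅, {failA}⟩ ∨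
      (∃ a ∈ X, r = ⟨some a, ∅, ∅⟩) ∨
      (∃ a ∈ (progAtoms P \ heads P) \ X, r = ⟨none, {a}, ∅⟩) := by
    intro r hr
    rcases hr with hc | hf
    · unfold checkAS at hc
      rcases hc with ((((h|h)|h)|h)|h)
      · exact Or.inl h
      · exact Or.inr (Or.inl h)
      · exact Or.inr (Or.inr (Or.inl h))
      · exact Or.inr (Or.inr (Or.inr (Or.inl h)))
      · exact Or.inr (Or.inr (Or.inr (Or.inr (Or.inl h))))
    · unfold fixProg at hf
      rcases hf with h | h
      · exact Or.inr (Or.inr (Or.inr (Or.inr (Or.inr (Or.inl h)))))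
      · exact Or.inr (Or.inr (Or.inr (Or.inr (Or.inr (Or.inr h)))))
  have hQ1 : ∀ p ∈ M, (⟨some (ns p), ∅, ∅⟩ : ARule α) ∈ Q := by
    intro p hp
    refine Set.mem_union_left _ ?_
    unfold checkAS
    exact Set.mem_union_left _ (Set.mem_union_left _ (Set.mem_union_left _
      (Set.mem_union_left _ ⟨p, hp, rfl⟩)))
  have hQ2 : ∀ s ∈ P, s.head ≠ none →
      (⟨s.head.map (sigMap P ps), sigMap P ps '' s.pos, sigMap P ns '' s.neg⟩ : ARule α) ∈ Q := by
    intro s hs hne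
    refine Set.mem_union_left _ ?_
    unfold checkAS
    exact Set.mem_union_left _ (Set.mem_union_left _ (Set.mem_union_left _
      (Set.mem_union_right _ ⟨s, hs, hne, rfl⟩)))
  have hQ3 : ∀ s ∈ P, s.head = none →
      (⟨some failA, sigMap P ps '' s.pos, sigMap P ns '' s.neg⟩ : ARule α) ∈ Q := by
    intro s hs hne
    refine Set.mem_union_left _ ?_
    unfold checkAS
    exact Set.mem_union_left _ (Set.mem_union_left _
      (Set.mem_union_right _ ⟨s, hs, hne, rfl⟩))
  have hQ4 : ∀ p ∈ heads P, (⟨some failA, {ps p}, {ns p}⟩ : ARule α) ∈ Q ∧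
      (⟨some failA, {ns p}, {ps p}⟩ : ARule α) ∈ Q := by
    intro p hp
    constructor
    · refine Set.mem_union_left _ ?_
      unfold checkAS
      exact Set.mem_union_left _ (Set.mem_union_right _ ⟨p, hp, Or.inl rfl⟩)
    · refine Set.mem_union_left _ ?_
      unfold checkAS
      exact Set.mem_union_left _ (Set.mem_union_right _ ⟨p, hp, Or.inr rfl⟩)
  have hQ5 : (⟨some asA, ∅, {failA}⟩ : ARule α) ∈ Q := by
    refine Set.mem_union_left _ ?_
    unfold checkAS
    exact Set.mem_union_right _ rfl
  have hQf : ∀ a ∈ X, (⟨some a, ∅, ∅⟩ : ARule α) ∈ Q := by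
    intro a ha
    refine Set.mem_union_right _ ?_
    unfold fixProg
    exact Or.inl ⟨a, ha, rfl⟩
  -- basic atom facts
  have hXB : ∀ a ∈ X, a ∈ progAtoms P := fun a ha => (hX ha).1
  have hXH' : ∀ a ∈ X, a ∉ heads P := fun a ha => (hX ha).2
  have hheadH : ∀ s ∈ P, ∀ h, s.head = some h → h ∈ heads P := fun s hs h hh => ⟨s, hs, hh⟩
  have hatomB : ∀ s ∈ P, (∀ a ∈ s.pos, a ∈ progAtoms P) ∧ (∀ a ∈ s.neg, a ∈ progAtoms P) := by
    intro s hs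
    constructor <;> intro a ha <;>
      · show a ∈ ⋃ r ∈ P, ARule.atoms r
        refine Set.mem_biUnion hs ?_
        unfold ARule.atoms
        first
          | exact Set.mem_union_left _ (Set.mem_union_right _ ha)
          | exact Set.mem_union_right _ ha
  have hsig_in : ∀ (f : α → α), ∀ a ∈ heads P, sigMap P f a = f a := by
    intro f a ha; simp [sigMap, ha]
  have hsig_out : ∀ (f : α → α), ∀ a, a ∉ heads P → sigMap P f a = a := by
    intro f a ha; simp [sigMap, ha]
  have hpsB : ∀ p ∈ heads P, ps p ∉ progAtoms P := fun p hp => (hfresh p hp).1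
  have hnsB : ∀ p ∈ heads P, ns p ∉ progAtoms P := fun p hp => (hfresh p hp).2.1
  -- facts derived in N
  have hnsM : ∀ p ∈ M, ns p ∈ N := fun p hp =>
    as_derive hN (hQ1 p hp) rfl (by simp) (by simp)
  have hXN : ∀ a ∈ X, a ∈ N := fun a ha =>
    as_derive hN (hQf a ha) rfl (by simp) (by simp)
  -- shape of atoms in N
  have hNshape : ∀ a ∈ N, (∃ p ∈ heads P, a = ps p) ∨ (∃ p ∈ M, a = ns p) ∨
      a = failA ∨ a = asA ∨ a ∈ X := by
    intro a ha
    obtain ⟨r', ⟨r, hr, hnegged, rfl⟩, hh⟩ := as_sub_reduct hN ha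
    rcases hQelim hr with h|h|h|h|h|h|h
    · obtain ⟨p, hp, rfl⟩ := h
      simp only [Option.some.injEq] at hh
      exact Or.inr (Or.inl ⟨p, hp, hh.symm⟩)
    · obtain ⟨s, hs, hne, rfl⟩ := h
      obtain ⟨h0, hh0⟩ := Option.ne_none_iff_exists'.mp hne
      have hh0H : h0 ∈ heads P := hheadH s hs h0 hh0
      rw [show (⟨s.head.map (sigMap P ps), sigMap P ps '' s.pos, sigMap P ns '' s.neg⟩ :
        ARule α).head = s.head.map (sigMap P ps) from rfl, hh0] at hh
      simp only [Option.map_some, Option.some.injEq] at hh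
      rw [hsig_in ps h0 hh0H] at hh
      exact Or.inl ⟨h0, hh0H, hh.symm⟩
    · obtain ⟨s, hs, hne, rfl⟩ := h
      simp only [Option.some.injEq] at hh
      exact Or.inr (Or.inr (Or.inl hh.symm))
    · obtain ⟨p, hp, (rfl | rfl)⟩ := h <;>
        · simp only [Option.some.injEq] at hh
          exact Or.inr (Or.inr (Or.inl hh.symm))
    · subst h
      simp only [Option.some.injEq] at hh
      exact Or.inr (Or.inr (Or.inr (Or.inl hh.symm)))
    · obtain ⟨b, hb, rfl⟩ := h
      simp only [Option.some.injEq] at hh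
      exact Or.inr (Or.inr (Or.inr (Or.inr (hh ▸ hb))))
    · obtain ⟨b, hb, rfl⟩ := h
      cases hh
  -- decoding the signatures
  have hnsN : ∀ p ∈ heads P, (ns p ∈ N ↔ p ∈ M) := by
    intro p hp
    constructor
    · intro hin
      rcases hNshape _ hin with ⟨q,hq,e⟩|⟨q,hq,e⟩|e|e|hx
      · exact absurd e.symm (hdisj q hq p hp)
      · rwa [hnsInj hp (hM hq) e]
      · exact absurd e (hfresh p hp).2.2.2.2.1
      · exact absurd e (hfresh p hp).2.2.2.2.2
      · exact absurd (hXB _ hx) (hnsB p hp)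
    · exact hnsM p
  have hDN : ∀ a ∈ progAtoms P, a ∉ heads P → (a ∈ N ↔ a ∈ X) := by
    intro a haB haH
    constructor
    · intro hin
      rcases hNshape a hin with ⟨q,hq,e⟩|⟨q,hq,e⟩|e|e|hx
      · exact absurd (e ▸ haB) (hpsB q hq)
      · exact absurd (e ▸ haB) (hnsB q (hM hq))
      · exact absurd (e ▸ haB) hfail
      · exact absurd (e ▸ haB) has
      · exact hx
    · exact hXN a
  -- the positive-signature extract
  set T : Set α := {p | p ∈ heads P ∧ ps p ∈ N} with hTdef
  have hTH : T ⊆ heads P := fun p hp => hp.1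
  have hsigps : ∀ a ∈ progAtoms P, (sigMap P ps a ∈ N ↔ a ∈ T ∪ X) := by
    intro a haB
    by_cases hh : a ∈ heads P
    · rw [hsig_in ps a hh]
      constructor
      · intro hin; exact Or.inl ⟨hh, hin⟩
      · rintro (ht | hx)
        · exact ht.2
        · exact absurd hh (hXH' a hx)
    · rw [hsig_out ps a hh, hDN a haB hh]
      constructor
      · exact Or.inr
      · rintro (ht|hx)
        · exact absurd (hTH ht) hh
        · exact hx
  have hsigns : ∀ a ∈ progAtoms P, (sigMap P ns a ∈ N ↔ a ∈ M ∪ X) := by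
    intro a haB
    by_cases hh : a ∈ heads P
    · rw [hsig_in ns a hh]
      constructor
      · intro hin; exact Or.inl ((hnsN a hh).1 hin)
      · rintro (hm | hx)
        · exact hnsM a hm
        · exact absurd hh (hXH' a hx)
    · rw [hsig_out ns a hh, hDN a haB hh]
      constructor
      · exact Or.inr
      · rintro (hm|hx)
        · exact absurd (hM hm) hh
        · exact hx
  have hposeval : ∀ s ∈ P, (sigMap P ps '' s.pos ⊆ N ↔ s.pos ⊆ T ∪ X) := by
    intro s hs
    constructor
    · intro hsub a ha
      exact (hsigps a ((hatomB s hs).1 a ha)).1 (hsub (Set.mem_image_of_mem _ ha))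
    · rintro hsub b ⟨a, ha, rfl⟩
      exact (hsigps a ((hatomB s hs).1 a ha)).2 (hsub ha)
  have hnegeval : ∀ s ∈ P, ((∀ b ∈ sigMap P ns '' s.neg, b ∉ N) ↔ ∀ a ∈ s.neg, a ∉ M ∪ X) := by
    intro s hs
    constructor
    · intro hno a ha hin
      exact hno _ (Set.mem_image_of_mem _ ha) ((hsigns a ((hatomB s hs).2 a ha)).2 hin)
    · rintro hno b ⟨a, ha, rfl⟩ hin
      exact hno a ha ((hsigns a ((hatomB s hs).2 a ha)).1 hin)
  -- asA iff not failA
  have hasA_iff : asA ∈ N ↔ failA ∉ N := by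
    constructor
    · intro ha
      obtain ⟨r', ⟨r, hr, hnegged, rfl⟩, hh⟩ := as_sub_reduct hN ha
      rcases hQelim hr with h|h|h|h|h|h|h
      · obtain ⟨p, hp, rfl⟩ := h
        simp only [Option.some.injEq] at hh
        exact absurd hh ((hfresh p (hM hp)).2.2.2.2.2)
      · obtain ⟨s, hs, hne, rfl⟩ := h
        obtain ⟨h0, hh0⟩ := Option.ne_none_iff_exists'.mp hne
        have hh0H := hheadH s hs h0 hh0
        rw [show (⟨s.head.map (sigMap P ps), sigMap P ps '' s.pos, sigMap P ns '' s.neg⟩ :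
          ARule α).head = s.head.map (sigMap P ps) from rfl, hh0] at hh
        simp only [Option.map_some, Option.some.injEq] at hh
        rw [hsig_in ps h0 hh0H] at hh
        exact absurd hh ((hfresh h0 hh0H).2.2.2.1)
      · obtain ⟨s, hs, hne, rfl⟩ := h
        simp only [Option.some.injEq] at hh
        exact absurd hh hfa
      · obtain ⟨p, hp, (rfl|rfl)⟩ := h <;>
          · simp only [Option.some.injEq] at hh
            exact absurd hh hfa
      · subst h
        exact fun hfN => hnegged failA rfl hfN
      · obtain ⟨a, ha2, rfl⟩ := h
        simp only [Option.some.injEq] at hh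
        exact absurd (hh ▸ hXB a ha2) has
      · obtain ⟨a, ha2, rfl⟩ := h
        cases hh
    · intro hf
      exact as_derive hN hQ5 rfl (by simp) (by simpa using hf)
  -- T ∪ X is closed under the definite reduct rules of P w.r.t. M ∪ X
  have hLmodel : ∀ s ∈ P, ∀ h0, s.head = some h0 → (∀ a ∈ s.neg, a ∉ M ∪ X) →
      s.pos ⊆ T ∪ X → h0 ∈ T := by
    intro s hs h0 hh0 hneg hpos
    have hh0H : h0 ∈ heads P := hheadH s hs h0 hh0
    have hmem := hQ2 s hs (by simp [hh0])
    have hps : ps h0 ∈ N := by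
      have hder := as_derive hN hmem (a := sigMap P ps h0) (by simp [hh0])
        ((hposeval s hs).2 hpos) ((hnegeval s hs).2 hneg)
      rwa [hsig_in ps h0 hh0H] at hder
    exact ⟨hh0H, hps⟩
  -- T ∪ X is the least such closed set
  have hLleast : ∀ K : Set α, (∀ a ∈ X, a ∈ K) →
      (∀ s ∈ P, ∀ h0, s.head = some h0 → (∀ a ∈ s.neg, a ∉ M ∪ X) → s.pos ⊆ K → h0 ∈ K) →
      T ⊆ K := by
    intro K hXK hcl
    set K0 : Set α := K ∩ (T ∪ X) with hK0def
    have hXK0 : ∀ a ∈ X, a ∈ K0 := fun a ha => ⟨hXK a ha, Or.inr ha⟩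
    have hclK0 : ∀ s ∈ P, ∀ h0, s.head = some h0 → (∀ a ∈ s.neg, a ∉ M ∪ X) →
        s.pos ⊆ K0 → h0 ∈ K0 := by
      intro s hs h0 hh0 hneg hpos
      exact ⟨hcl s hs h0 hh0 hneg (hpos.trans Set.inter_subset_left),
        Or.inl (hLmodel s hs h0 hh0 hneg (hpos.trans Set.inter_subset_right))⟩
    set N' : Set α := N \ (ps '' {p | p ∈ T ∧ p ∉ K0}) with hN'def
    have hN'sub : N' ⊆ N := Set.diff_subset
    have hsafe : ∀ b ∈ N, (∀ q, q ∈ T → q ∉ K0 → b ≠ ps q) → b ∈ N' := by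
      intro b hb hne
      refine ⟨hb, ?_⟩
      rintro ⟨q, ⟨hqT, hqK⟩, rfl⟩
      exact hne q hqT hqK rfl
    have hmod : isModel N' (reduct Q N) := by
      rintro r' ⟨r, hr, hnegged, rfl⟩ hbt
      have hposN' : r.pos ⊆ N' := hbt.1
      have hbtN : bodyTrue N (⟨r.head, r.pos, ∅⟩ : ARule α) := ⟨hposN'.trans hN'sub, by simp⟩
      obtain ⟨b, hb, hbN⟩ := hN.1 _ ⟨r, hr, hnegged, rfl⟩ hbtN
      refine ⟨b, hb, ?_⟩
      rcases hQelim hr with h|h|h|h|h|h|h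
      · obtain ⟨p, hp, rfl⟩ := h
        simp only [Option.some.injEq] at hb
        subst hb
        exact hsafe _ hbN (fun q hq hqk e => hdisj q (hTH hq) p (hM hp) e.symm)
      · obtain ⟨s, hs, hne, rfl⟩ := h
        obtain ⟨h0, hh0⟩ := Option.ne_none_iff_exists'.mp hne
        have hh0H := hheadH s hs h0 hh0
        rw [show (⟨s.head.map (sigMap P ps), sigMap P ps '' s.pos, sigMap P ns '' s.neg⟩ :
          ARule α).head = s.head.map (sigMap P ps) from rfl, hh0] at hb
        simp only [Option.map_some, Option.some.injEq] at hb
        rw [hsig_in ps h0 hh0H] at hb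
        subst hb
        have hposK0 : s.pos ⊆ K0 := by
          intro a ha
          have haB := (hatomB s hs).1 a ha
          have haN' : sigMap P ps a ∈ N' := hposN' (Set.mem_image_of_mem _ ha)
          by_cases haH : a ∈ heads P
          · rw [hsig_in ps a haH] at haN'
            have haT : a ∈ T := ⟨haH, haN'.1⟩
            have hnotbad : a ∉ {p | p ∈ T ∧ p ∉ K0} := by
              intro hcontra
              exact haN'.2 (Set.mem_image_of_mem _ hcontra)
            simp only [Set.mem_setOf_eq, not_and, not_not] at hnotbad
            exact hnotbad haT
          · rw [hsig_out ps a haH] at haN'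
            exact hXK0 a ((hDN a haB haH).1 haN'.1)
        have hnegok : ∀ a ∈ s.neg, a ∉ M ∪ X := (hnegeval s hs).1 hnegged
        have hinK0 : h0 ∈ K0 := hclK0 s hs h0 hh0 hnegok hposK0
        exact hsafe _ hbN (fun q hq hqk e => hqk ((hpsInj hh0H (hTH hq) e) ▸ hinK0))
      · obtain ⟨s, hs, hne, rfl⟩ := h
        simp only [Option.some.injEq] at hb
        subst hb
        exact hsafe _ hbN (fun q hq hqk e => (hfresh q (hTH hq)).2.2.1 e.symm)
      · obtain ⟨p, hp, (rfl|rfl)⟩ := h <;>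
          · simp only [Option.some.injEq] at hb
            subst hb
            exact hsafe _ hbN (fun q hq hqk e => (hfresh q (hTH hq)).2.2.1 e.symm)
      · subst h
        simp only [Option.some.injEq] at hb
        subst hb
        exact hsafe _ hbN (fun q hq hqk e => (hfresh q (hTH hq)).2.2.2.1 e.symm)
      · obtain ⟨a, ha, rfl⟩ := h
        simp only [Option.some.injEq] at hb
        subst hb
        exact hsafe _ hbN (fun q hq hqk e => hpsB q (hTH hq) (e ▸ hXB _ ha))
      · obtain ⟨a, ha, rfl⟩ := h
        cases hb
    have hsubN' := as_min hN hN'sub hmod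
    intro p hp
    by_contra hpK
    have hpK0 : p ∉ K0 := fun hk => hpK hk.1
    have hpsN' : ps p ∈ N' := hsubN' hp.2
    exact hpsN'.2 (Set.mem_image_of_mem _ ⟨hp, hpK0⟩)
  -- characterization of failA
  have hGoodIff : failA ∉ N ↔ (T = M ∧ ∀ s ∈ P, s.head = none →
      (∀ a ∈ s.neg, a ∉ M ∪ X) → ¬ (s.pos ⊆ T ∪ X)) := by
    constructor
    · intro hf
      have hTM : T = M := by
        apply Set.Subset.antisymm
        · intro p hp
          by_contra hpM
          refine hf (as_derive hN ((hQ4 p (hTH hp)).1) rfl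
            (Set.singleton_subset_iff.mpr hp.2) ?_)
          intro b hb
          rw [Set.mem_singleton_iff] at hb
          subst hb
          exact fun hin => hpM ((hnsN p (hTH hp)).1 hin)
        · intro p hp
          by_contra hpT
          refine hf (as_derive hN ((hQ4 p (hM hp)).2) rfl
            (Set.singleton_subset_iff.mpr (hnsM p hp)) ?_)
          intro b hb
          rw [Set.mem_singleton_iff] at hb
          subst hb
          exact fun hin => hpT ⟨hM hp, hin⟩
      refine ⟨hTM, ?_⟩
      intro s hs hsnone hneg hpos
      exact hf (as_derive hN (hQ3 s hs hsnone) rfl ((hposeval s hs).2 hpos)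
        ((hnegeval s hs).2 hneg))
    · rintro ⟨hTM, hcon⟩ hfN
      have hmod : isModel (N \ ({failA} : Set α)) (reduct Q N) := by
        rintro r' ⟨r, hr, hnegged, rfl⟩ hbt
        have hposN' : r.pos ⊆ N \ ({failA} : Set α) := hbt.1
        have hbtN : bodyTrue N (⟨r.head, r.pos, ∅⟩ : ARule α) :=
          ⟨hposN'.trans Set.diff_subset, by simp⟩
        obtain ⟨b, hb, hbN⟩ := hN.1 _ ⟨r, hr, hnegged, rfl⟩ hbtN
        refine ⟨b, hb, hbN, ?_⟩
        intro hbfail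
        rw [Set.mem_singleton_iff] at hbfail
        rw [hbfail] at hb
        rcases hQelim hr with h|h|h|h|h|h|h
        · obtain ⟨p, hp, rfl⟩ := h
          simp only [Option.some.injEq] at hb
          exact (hfresh p (hM hp)).2.2.2.2.1 hb
        · obtain ⟨s, hs, hne, rfl⟩ := h
          obtain ⟨h0, hh0⟩ := Option.ne_none_iff_exists'.mp hne
          have hh0H := hheadH s hs h0 hh0
          rw [show (⟨s.head.map (sigMap P ps), sigMap P ps '' s.pos, sigMap P ns '' s.neg⟩ :
            ARule α).head = s.head.map (sigMap P ps) from rfl, hh0] at hb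
          simp only [Option.map_some, Option.some.injEq] at hb
          rw [hsig_in ps h0 hh0H] at hb
          exact (hfresh h0 hh0H).2.2.1 hb
        · obtain ⟨s, hs, hsnone, rfl⟩ := h
          exact hcon s hs hsnone ((hnegeval s hs).1 hnegged)
            ((hposeval s hs).1 (hposN'.trans Set.diff_subset))
        · obtain ⟨p, hp, (rfl|rfl)⟩ := h
          · have hpnotM : p ∉ M := fun hm => hnegged (ns p) rfl (hnsM p hm)
            have hpsN : ps p ∈ N \ ({failA} : Set α) := hposN' rfl
            have hpT : p ∈ T := ⟨hp, hpsN.1⟩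
            exact hpnotM (by rw [← hTM]; exact hpT)
          · have hpnotT : p ∉ T := fun ht => hnegged (ps p) rfl ht.2
            have hnsN' : ns p ∈ N \ ({failA} : Set α) := hposN' rfl
            exact hpnotT (by rw [hTM]; exact (hnsN p hp).1 hnsN'.1)
        · subst h
          simp only [Option.some.injEq] at hb
          exact hfa hb.symm
        · obtain ⟨a, ha, rfl⟩ := h
          simp only [Option.some.injEq] at hb
          exact hfail (hb ▸ hXB a ha)
        · obtain ⟨a, ha, rfl⟩ := h
          cases hb
      have hsub := as_min hN Set.diff_subset hmod
      exact (hsub hfN).2 rfl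
  -- final equivalence
  rw [hasA_iff, hGoodIff]
  constructor
  · rintro ⟨hTM, hcon⟩
    constructor
    · rintro r' ⟨r, hr, hnegged, rfl⟩ hbt
      have hpos : r.pos ⊆ M ∪ X := hbt.1
      have hposT : r.pos ⊆ T ∪ X := by rw [hTM]; exact hpos
      rcases hr with hrP | hrF
      · cases hhead : r.head with
        | none => exact absurd hposT (hcon r hrP hhead hnegged)
        | some h0 =>
            refine ⟨h0, rfl, Or.inl ?_⟩
            rw [← hTM]
            exact hLmodel r hrP h0 hhead hnegged hposT
      · unfold fixProg at hrF
        rcases hrF with ⟨a, ha, rfl⟩ | ⟨a, ha, rfl⟩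
        · exact ⟨a, rfl, Or.inr ha⟩
        · exfalso
          rcases hpos (Set.mem_singleton a) with hm | hx
          · exact ha.1.2 (hM hm)
          · exact ha.2 hx
    · intro J hJ hmodJ
      have hXJ : ∀ a ∈ X, a ∈ J := by
        intro a ha
        have hrule : (⟨some a, ∅, ∅⟩ : ARule α) ∈
            reduct (P ∪ fixProg (progAtoms P \ heads P) X) (M ∪ X) :=
          ⟨⟨some a, ∅, ∅⟩, Or.inr (Or.inl ⟨a, ha, rfl⟩), by simp, rfl⟩
        obtain ⟨b, hb, hbJ⟩ := hmodJ _ hrule ⟨by simp, by simp⟩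
        simp only [Option.some.injEq] at hb
        exact hb ▸ hbJ
      have hTJ : T ⊆ J := by
        refine hLleast J hXJ ?_
        intro s hs h0 hh0 hneg hposJ
        have hrule : (⟨s.head, s.pos, ∅⟩ : ARule α) ∈
            reduct (P ∪ fixProg (progAtoms P \ heads P) X) (M ∪ X) :=
          ⟨s, Or.inl hs, hneg, rfl⟩
        obtain ⟨b, hb, hbJ⟩ := hmodJ _ hrule ⟨hposJ, by simp⟩
        rw [hh0] at hb
        simp only [Option.some.injEq] at hb
        exact hb ▸ hbJ
      have hMXJ : M ∪ X ⊆ J := by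
        rintro a (ham | hax)
        · exact hTJ (by rw [hTM]; exact ham)
        · exact hXJ a hax
      rw [Set.ssubset_def] at hJ
      exact hJ.2 hMXJ
  · intro hAS
    have hclMX : ∀ s ∈ P, ∀ h0, s.head = some h0 → (∀ a ∈ s.neg, a ∉ M ∪ X) →
        s.pos ⊆ M ∪ X → h0 ∈ M ∪ X := by
      intro s hs h0 hh0 hneg hpos
      obtain ⟨b, hb, hbJ⟩ := hAS.1 _ (show (⟨s.head, s.pos, ∅⟩ : ARule α) ∈
        reduct (P ∪ fixProg (progAtoms P \ heads P) X) (M ∪ X) from ⟨s, Or.inl hs, hneg, rfl⟩)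
        ⟨hpos, by simp⟩
      rw [hh0] at hb
      simp only [Option.some.injEq] at hb
      exact hb ▸ hbJ
    have hTMX : T ⊆ M ∪ X := hLleast (M ∪ X) (fun a ha => Or.inr ha) hclMX
    have hTM' : T ⊆ M := by
      intro p hp
      rcases hTMX hp with hm|hx
      · exact hm
      · exact absurd (hTH hp) (hXH' p hx)
    have hJmod : isModel ((T ∪ X) ∩ (M ∪ X))
        (reduct (P ∪ fixProg (progAtoms P \ heads P) X) (M ∪ X)) := by
      rintro r' ⟨r, hr, hnegged, rfl⟩ hbt
      have hpos : r.pos ⊆ (T ∪ X) ∩ (M ∪ X) := hbt.1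
      rcases hr with hrP | hrF
      · cases hhead : r.head with
        | none =>
            exfalso
            obtain ⟨b, hb, _⟩ := hAS.1 _ (show (⟨r.head, r.pos, ∅⟩ : ARule α) ∈
              reduct (P ∪ fixProg (progAtoms P \ heads P) X) (M ∪ X) from
              ⟨r, Or.inl hrP, hnegged, rfl⟩) ⟨hpos.trans Set.inter_subset_right, by simp⟩
            rw [hhead] at hb
            cases hb
        | some h0 =>
            refine ⟨h0, rfl, Or.inl (hLmodel r hrP h0 hhead hnegged
              (hpos.trans Set.inter_subset_left)), ?_⟩
            obtain ⟨b, hb, hbM⟩ := hAS.1 _ (show (⟨r.head, r.pos, ∅⟩ : ARule α) ∈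
              reduct (P ∪ fixProg (progAtoms P \ heads P) X) (M ∪ X) from
              ⟨r, Or.inl hrP, hnegged, rfl⟩) ⟨hpos.trans Set.inter_subset_right, by simp⟩
            rw [hhead] at hb
            simp only [Option.some.injEq] at hb
            exact hb ▸ hbM
      · unfold fixProg at hrF
        rcases hrF with ⟨a, ha, rfl⟩ | ⟨a, ha, rfl⟩
        · exact ⟨a, rfl, Or.inr ha, Or.inr ha⟩
        · exfalso
          rcases (hpos.trans Set.inter_subset_right) (Set.mem_singleton a) with hm|hx
          · exact ha.1.2 (hM hm)
          · exact ha.2 hx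
    have hMXsub : M ∪ X ⊆ (T ∪ X) ∩ (M ∪ X) := by
      by_contra hc
      exact hAS.2 _ ⟨Set.inter_subset_right, fun h2 => hc h2⟩ hJmod
    have hMT : M ⊆ T := by
      intro p hp
      rcases (hMXsub (Or.inl hp)).1 with ht|hx
      · exact ht
      · exact absurd (hM hp) (hXH' p hx)
    have hTM : T = M := Set.Subset.antisymm hTM' hMT
    refine ⟨hTM, ?_⟩
    intro s hs hsnone hneg hpos
    have hposMX : s.pos ⊆ M ∪ X := by rw [← hTM]; exact hpos
    obtain ⟨b, hb, _⟩ := hAS.1 _ (show (⟨s.head, s.pos, ∅⟩ : ARule α) ∈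
      reduct (P ∪ fixProg (progAtoms P \ heads P) X) (M ∪ X) from ⟨s, Or.inl hs, hneg, rfl⟩)
      ⟨hposMX, by simp⟩
    rw [hsnone] at hb
    cases hb
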